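/- If the hyperspace system (2^X, 2^f) has eventual shadowing, then the base system (X,f) has eventual shadowing. -/

import Mathlib

open Filter Topology TopologicalSpace

/-- The induced map on the hyperspace of nonempty compact subsets. -/
def hyperMap {X : Type*} [MetricSpace X] (f : X → X) (hf : Continuous f) :
    NonemptyCompacts X → NonemptyCompacts X :=
  fun A => ⟨⟨f '' A, A.isCompact.image hf⟩, A.nonempty.image f⟩

/-- Singleton as a nonempty compact. -/
def singNC {X : Type*} [MetricSpace X] (x : X) : NonemptyCompacts X :=
  ⟨⟨{x}, isCompact_singleton⟩, ⟨x, rfl⟩⟩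

lemma singNC_dist {X : Type*} [MetricSpace X] (a b : X) :
    dist (singNC a) (singNC b) = dist a b := by
  rw [Metric.NonemptyCompacts.dist_eq]
  show Metric.hausdorffDist ({a} : Set X) {b} = dist a b
  apply le_antisymm
  · apply Metric.hausdorffDist_le_of_mem_dist dist_nonneg
    · rintro x rfl; exact ⟨b, rfl, le_refl _⟩
    · rintro y rfl; exact ⟨a, rfl, (dist_comm _ _).le⟩
  · have hne : EMetric.hausdorffEdist ({a} : Set X) {b} ≠ ⊤ :=
      Metric.hausdorffEdist_ne_top_of_nonempty_of_bounded ⟨a, rfl⟩ ⟨b, rfl⟩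
        Bornology.isBounded_singleton Bornology.isBounded_singleton
    have := Metric.infDist_le_hausdorffDist_of_mem (Set.mem_singleton a) hne
    rwa [Metric.infDist_singleton] at this

lemma hyperMap_sing {X : Type*} [MetricSpace X] (f : X → X) (hf : Continuous f) (x : X) :
    hyperMap f hf (singNC x) = singNC (f x) := by
  apply TopologicalSpace.NonemptyCompacts.ext
  simp [hyperMap, singNC]
  exact Set.image_singleton

lemma hyperMap_iter_carrier {X : Type*} [MetricSpace X] (f : X → X) (hf : Continuous f)
    (B : NonemptyCompacts X) (i : ℕ) :
    (((hyperMap f hf)^[i] B : NonemptyCompacts X) : Set X) = f^[i] '' (B : Set X) := by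
  induction i with
  | zero => simp
  | succ n ih =>
    rw [Function.iterate_succ_apply']
    show (f '' _) = _
    rw [ih, ← Set.image_comp, ← Function.iterate_succ']

/-- if the hyperspace system (2ˣ, 2ᶠ) has eventual shadowing, then the base
system (X, f) has eventual shadowing. -/
theorem eventualShadowing_of_hyperspace_eventualShadowing
    {X : Type*} [MetricSpace X] [CompactSpace X]
    (f : X → X) (hf : Continuous f)
    (hsh : ∀ ε > (0:ℝ), ∃ δ > (0:ℝ), ∀ A : ℕ → NonemptyCompacts X,
      (∀ i, dist (hyperMap f hf (A i)) (A (i + 1)) < δ) →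
      ∃ B : NonemptyCompacts X, ∃ N : ℕ,
        ∀ i ≥ N, dist ((hyperMap f hf)^[i] B) (A i) < ε) :
    ∀ ε > (0:ℝ), ∃ δ > (0:ℝ), ∀ x : ℕ → X,
      (∀ i, dist (f (x i)) (x (i + 1)) < δ) →
      ∃ z : X, ∃ N : ℕ, ∀ i ≥ N, dist (f^[i] z) (x i) < ε := by
  intro ε hε
  obtain ⟨δ, hδ, H⟩ := hsh ε hε
  refine ⟨δ, hδ, fun x hx => ?_⟩
  obtain ⟨B, N, hB⟩ := H (fun i => singNC (x i)) (fun i => by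
    rw [hyperMap_sing, singNC_dist]; exact hx i)
  obtain ⟨z, hz⟩ := B.nonempty
  refine ⟨z, N, fun i hi => ?_⟩
  have h := hB i hi
  rw [Metric.NonemptyCompacts.dist_eq] at h
  have hmem : f^[i] z ∈ (((hyperMap f hf)^[i] B : NonemptyCompacts X) : Set X) := by
    rw [hyperMap_iter_carrier]; exact ⟨z, hz, rfl⟩
  have hne : EMetric.hausdorffEdist
      ((((hyperMap f hf)^[i] B : NonemptyCompacts X)) : Set X)
      ((singNC (x i) : NonemptyCompacts X) : Set X) ≠ ⊤ :=
    Metric.hausdorffEdist_ne_top_of_nonempty_of_bounded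
      ((hyperMap f hf)^[i] B).nonempty (singNC (x i)).nonempty
      ((hyperMap f hf)^[i] B).isCompact.isBounded (singNC (x i)).isCompact.isBounded
  have hle := Metric.infDist_le_hausdorffDist_of_mem hmem hne
  have : Metric.infDist (f^[i] z) ((singNC (x i) : NonemptyCompacts X) : Set X)
      = dist (f^[i] z) (x i) := by
    show Metric.infDist _ ({x i} : Set X) = _
    simp [Metric.infDist_singleton]
  linarith [this ▸ hle]
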